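/- For α > 1, p ∈ (0, 0.5], and z ≥ 1, the function t(z) = 1/p − ((1−p)/p)z^α − ((1/p) − ((1−p)/p)z)^α satisfies t(z) ≤ 0, i.e., ((1/p) − ((1−p)/p)z)^α ≥ 1/p − ((1−p)/p)z^α, provided (1/p) − ((1−p)/p)z ≥ 0. -/

import Mathlib

open Set

/-- For `α > 1`, `p ∈ (0, 1/2]`, and `z ≥ 1` with `(1/p) − ((1−p)/p)z ≥ 0`, one has
`((1/p) − ((1−p)/p)z)^α ≥ 1/p − ((1−p)/p)z^α`, i.e. `t(z) ≤ 0`. -/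
theorem power_key_inequality
    (α p z : ℝ) (hα : 1 < α) (hp : p ∈ Ioc (0:ℝ) (1/2)) (hz : 1 ≤ z)
    (hnonneg : 0 ≤ (1/p) - ((1 - p)/p) * z) :
    1/p - ((1 - p)/p) * z ^ α - ((1/p) - ((1 - p)/p) * z) ^ α ≤ 0 := by
  obtain ⟨hp0, hp2⟩ := hp
  set q : ℝ := (1 - p)/p with hqdef
  set w : ℝ := (1/p) - q * z with hw
  have hq : 1/p = q + 1 := by rw [hqdef]; field_simp; ring
  have hq1 : (1:ℝ) ≤ q := by
    rw [hqdef, le_div_iff₀ hp0]; linarith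
  have hB1 : 1 + α * (z - 1) ≤ z ^ α := by
    have := one_add_mul_self_le_rpow_one_add (by linarith : (-1:ℝ) ≤ z - 1) hα.le
    simpa using this
  have hB2 : 1 + α * (w - 1) ≤ w ^ α := by
    have := one_add_mul_self_le_rpow_one_add (by linarith : (-1:ℝ) ≤ w - 1) hα.le
    simpa using this
  have hBq : q + α * (q * (z - 1)) ≤ q * z ^ α := by
    have := mul_le_mul_of_nonneg_left hB1 (by linarith : (0:ℝ) ≤ q)
    nlinarith [this]
  have hw1 : α * (w - 1) = -(α * (q * (z - 1))) := by
    rw [hw, hq]; ring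
  rw [hw1] at hB2
  linarith
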